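/- arXiv:2011.02386 — 2 statements merged into one kernel-verified Lean document; each statement's English description precedes it below -/
import Mathlib

section
/- Let s and t be rational numbers with s ≠ 0 and t² ≠ s. Then the Weierstrass curve F_s(t) satisfies c₄³/Δ = −2⁶·3³·(t² − s)/s. Consequently, for a fixed nonzero s, any two fibres F_s(t₁) and F_s(t₂) with t₁² ≠ t₂² (and t₁², t₂² ≠ s) have distinct j-invariants, so the family F_s is non-isotrivial. -/
/-- The Weierstrass curve `F_s(t) : y² = x³ + 3t·x² + 3s·x + s·t`. -/
def Fcurve (s t : ℚ) : WeierstrassCurve ℚ :=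
  { a₁ := 0, a₂ := 3 * t, a₃ := 0, a₄ := 3 * s, a₆ := s * t }

lemma Fcurve_c₄ (s t : ℚ) : (Fcurve s t).c₄ = 144 * (t ^ 2 - s) := by
  simp only [Fcurve, WeierstrassCurve.c₄, WeierstrassCurve.b₂, WeierstrassCurve.b₄]
  ring

lemma Fcurve_Δ (s t : ℚ) : (Fcurve s t).Δ = -1728 * s * (t ^ 2 - s) ^ 2 := by
  simp only [Fcurve, WeierstrassCurve.Δ, WeierstrassCurve.b₂, WeierstrassCurve.b₄,
    WeierstrassCurve.b₆, WeierstrassCurve.b₈]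
  ring

lemma Fcurve_c₄_pow_three_div_Δ {s : ℚ} (hs : s ≠ 0) {t : ℚ} (ht : t ^ 2 ≠ s) :
    (Fcurve s t).c₄ ^ 3 / (Fcurve s t).Δ = -(2 ^ 6) * 3 ^ 3 * (t ^ 2 - s) / s := by
  have ht' : t ^ 2 - s ≠ 0 := sub_ne_zero.mpr ht
  rw [Fcurve_c₄, Fcurve_Δ]
  field_simp
  ring

theorem Fcurve_j_invariant (s : ℚ) (hs : s ≠ 0) :
    (∀ t : ℚ, t ^ 2 ≠ s →
      (Fcurve s t).c₄ ^ 3 / (Fcurve s t).Δ = -(2 ^ 6) * 3 ^ 3 * (t ^ 2 - s) / s) ∧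
    (∀ t₁ t₂ : ℚ, t₁ ^ 2 ≠ s → t₂ ^ 2 ≠ s → t₁ ^ 2 ≠ t₂ ^ 2 →
      (Fcurve s t₁).c₄ ^ 3 / (Fcurve s t₁).Δ ≠ (Fcurve s t₂).c₄ ^ 3 / (Fcurve s t₂).Δ) := by
  refine ⟨fun t ht => Fcurve_c₄_pow_three_div_Δ hs ht, fun t₁ t₂ h₁ h₂ hne hj => hne ?_⟩
  rw [Fcurve_c₄_pow_three_div_Δ hs h₁, Fcurve_c₄_pow_three_div_Δ hs h₂,
    div_left_inj' hs, mul_right_inj' (by norm_num), sub_left_inj] at hj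
  exact hj
end

section
/- Let s be a nonzero rational number. Then there exist nonzero polynomials A, B ∈ ℚ[X] with X² − s = A² + 3·B² if and only if there exists a nonzero rational number r with s = −3·r². -/
open Polynomial

theorem insipid_place_criterion (s : ℚ) (hs : s ≠ 0) :
    (∃ A B : ℚ[X], A ≠ 0 ∧ B ≠ 0 ∧ X ^ 2 - C s = A ^ 2 + 3 * B ^ 2) ↔
    ∃ r : ℚ, r ≠ 0 ∧ s = -3 * r ^ 2 := by
  constructor
  · rintro ⟨A, B, hA, hB, h⟩
    set k := max A.natDegree B.natDegree with hk
    have hAk : A.natDegree ≤ k := le_max_left _ _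
    have hBk : B.natDegree ≤ k := le_max_right _ _
    have h3 : (3 : ℚ[X]) = C 3 := (map_ofNat C 3).symm
    have hc : (X ^ 2 - C s : ℚ[X]).coeff (2 * k)
        = (A.coeff k) ^ 2 + 3 * (B.coeff k) ^ 2 := by
      rw [h, coeff_add, h3, coeff_C_mul, coeff_pow_of_natDegree_le hAk,
        coeff_pow_of_natDegree_le hBk]
    have hne : (A.coeff k) ^ 2 + 3 * (B.coeff k) ^ 2 ≠ 0 := by
      rcases max_cases A.natDegree B.natDegree with ⟨he, _⟩ | ⟨he, _⟩
      · have : A.coeff k ≠ 0 := by rw [hk, he]; exact mt leadingCoeff_eq_zero.mp hA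
        positivity
      · have : B.coeff k ≠ 0 := by rw [hk, he]; exact mt leadingCoeff_eq_zero.mp hB
        positivity
    have hdeg : (X ^ 2 - C s : ℚ[X]).natDegree = 2 := by
      compute_degree!
    have hk1 : k ≤ 1 := by
      have := le_natDegree_of_ne_zero (hc ▸ hne)
      omega
    obtain ⟨ha1, hb1⟩ : A.natDegree ≤ 1 ∧ B.natDegree ≤ 1 := by omega
    set a := A.coeff 1; set b := A.coeff 0; set c := B.coeff 1; set d := B.coeff 0
    have hAe : A = C a * X + C b := eq_X_add_C_of_natDegree_le_one ha1  -- name?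
    have hBe : B = C c * X + C d := eq_X_add_C_of_natDegree_le_one hb1
    rw [hAe, hBe] at h
    have hrhs : (C a * X + C b) ^ 2 + 3 * (C c * X + C d) ^ 2
        = C (a ^ 2 + 3 * c ^ 2) * X ^ 2 + C (2 * a * b + 6 * c * d) * X
          + C (b ^ 2 + 3 * d ^ 2) := by
      simp only [map_add, map_mul, map_pow, map_ofNat]; ring
    rw [hrhs] at h
    have e2 := congrArg (fun p => coeff p 2) h
    have e1 := congrArg (fun p => coeff p 1) h
    have e0 := congrArg (fun p => coeff p 0) h
    simp only [coeff_add, coeff_sub, coeff_C_mul, coeff_X_pow, coeff_X, coeff_C] at e2 e1 e0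
    norm_num at e2 e1 e0
    -- e2 : 1 = a^2 + 3*c^2, e1 : 0 = 2*a*b + 6*c*d, e0 : -s = b^2 + 3*d^2 (forms TBD)
    have ha0 : a ≠ 0 := by
      intro h0
      have hc0 : c ≠ 0 := by
        intro h0'; rw [h0, h0'] at e2; norm_num at e2
      have hsq : IsSquare (3 : ℚ) := ⟨1 / c, by field_simp; nlinarith [e2]⟩
      have h3irr : Irrational (Real.sqrt ((3 : ℚ) : ℝ)) := by
        have := (Nat.prime_three).irrational_sqrt
        simpa using this
      exact (irrational_sqrt_ratCast_iff_of_nonneg (by norm_num)).mp h3irr hsq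
    have hab : a * b = -(3 * c * d) := by nlinarith [e1]
    have hd0 : d ≠ 0 := by
      intro h0
      apply hs
      have hb : b = 0 := by
        have h' : (2 * a) * b = 0 := by rw [h0] at hab; nlinarith [hab]
        exact (mul_eq_zero.mp h').resolve_left (mul_ne_zero two_ne_zero ha0)
      rw [hb, h0] at e0
      nlinarith [e0]
    refine ⟨d / a, div_ne_zero hd0 ha0, ?_⟩
    field_simp
    linear_combination (-a^2) * e0 + (3*c*d - a*b) * hab + 3*d^2 * e2
  · rintro ⟨r, hr, rfl⟩
    refine ⟨X, C r, X_ne_zero, by simpa using hr, ?_⟩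
    rw [← C_pow, ← map_ofNat C 3, ← C_mul,
      show (-3 * r ^ 2 : ℚ) = -(3 * r ^ 2) by ring, map_neg, sub_neg_eq_add]
end
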